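/- In the unitary group U(2), let G be the subgroup generated by the matrices x = [[i, 0], [0, -i]] and y = [[0, -1], [1, 0]] together with the center S of U(2). Then the group extension S → G → G/S does not split; that is, there is no group homomorphism s : G/S → G with q ∘ s = id, where q : G → G/S is the quotient homomorphism. -/

import Mathlib

open Matrix

/-- The subgroup of a subgroup `G ≤ M` induced by the center of `M` is normal in `G`. -/
instance center_subgroupOf_normal {M : Type*} [Group M] (G : Subgroup M) :
    ((Subgroup.center M).subgroupOf G).Normal :=
  Subgroup.Normal.subgroupOf inferInstance G

/-- Let `G ≤ U(2)` be the subgroup generated by the unitary matrices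
`x = [[i,0],[0,-i]]` and `y = [[0,-1],[1,0]]` together with the center `S` of `U(2)`.
Then the extension `S → G → G/S` does not split: there is no homomorphism
`s : G/S → G` with `q ∘ s = id`. -/
theorem quaternion_extension_does_not_split (x y : Matrix.unitaryGroup (Fin 2) ℂ)
    (hx : (x : Matrix (Fin 2) (Fin 2) ℂ) = !![Complex.I, 0; 0, -Complex.I])
    (hy : (y : Matrix (Fin 2) (Fin 2) ℂ) = !![0, -1; 1, 0])
    (G : Subgroup (Matrix.unitaryGroup (Fin 2) ℂ))
    (hG : G = Subgroup.closure ({x, y} ∪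
      (Subgroup.center (Matrix.unitaryGroup (Fin 2) ℂ) : Set (Matrix.unitaryGroup (Fin 2) ℂ)))) :
    ¬ ∃ s : (G ⧸ (Subgroup.center (Matrix.unitaryGroup (Fin 2) ℂ)).subgroupOf G) →* G,
      (QuotientGroup.mk' ((Subgroup.center (Matrix.unitaryGroup (Fin 2) ℂ)).subgroupOf G)).comp s
        = MonoidHom.id _ := by
  rintro ⟨s, hs⟩
  set N := (Subgroup.center (Matrix.unitaryGroup (Fin 2) ℂ)).subgroupOf G with hN
  have hxG : x ∈ G := by
    rw [hG]; exact Subgroup.subset_closure (Or.inl (Set.mem_insert _ _))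
  have hyG : y ∈ G := by
    rw [hG]; exact Subgroup.subset_closure (Or.inl (Set.mem_insert_of_mem _ rfl))
  have hneg : (-1 : Matrix (Fin 2) (Fin 2) ℂ) ∈ Matrix.unitaryGroup (Fin 2) ℂ := by
    constructor <;> simp
  set z : Matrix.unitaryGroup (Fin 2) ℂ := ⟨-1, hneg⟩ with hz
  have hzc : z ∈ Subgroup.center (Matrix.unitaryGroup (Fin 2) ℂ) := by
    rw [Subgroup.mem_center_iff]
    intro g
    ext : 1
    push_cast [hz]
    simp
  have hzG : z ∈ G := by
    rw [hG]; exact Subgroup.subset_closure (Or.inr hzc)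
  set X : G := ⟨x, hxG⟩
  set Y : G := ⟨y, hyG⟩
  set Z : G := ⟨z, hzG⟩
  have hZN : Z ∈ N := hzc
  have hkey : X * Y = Y * X * Z := by
    ext i j
    push_cast
    rw [hx, hy]
    rw [show ((Z : Matrix.unitaryGroup (Fin 2) ℂ) : Matrix (Fin 2) (Fin 2) ℂ) = -1 from rfl]
    fin_cases i <;> fin_cases j <;>
      simp [Matrix.mul_apply, Fin.sum_univ_two]
  have hq : ((X * Y : G) : G ⧸ N) = ((Y * X : G) : G ⧸ N) := by
    rw [hkey, QuotientGroup.mk_mul, (QuotientGroup.eq_one_iff Z).mpr hZN, mul_one]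
  have happ : ∀ t : G ⧸ N, ((s t : G) : G ⧸ N) = t := by
    intro t
    have := congrArg (fun f => f t) hs
    simpa using this
  set a : G := s ((X : G ⧸ N)) with ha
  set b : G := s ((Y : G ⧸ N)) with hb
  have hca : X⁻¹ * a ∈ N := by
    rw [← QuotientGroup.eq]
    exact (happ _).symm
  have hcb : Y⁻¹ * b ∈ N := by
    rw [← QuotientGroup.eq]
    exact (happ _).symm
  have hab : a * b = b * a := by
    rw [ha, hb, ← _root_.map_mul, ← _root_.map_mul, ← QuotientGroup.mk_mul,
      ← QuotientGroup.mk_mul, hq]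
  set c : G := X⁻¹ * a with hc
  set d : G := Y⁻¹ * b with hd
  have hcc : (c : Matrix.unitaryGroup (Fin 2) ℂ) ∈
      Subgroup.center (Matrix.unitaryGroup (Fin 2) ℂ) := hca
  have hdc : (d : Matrix.unitaryGroup (Fin 2) ℂ) ∈
      Subgroup.center (Matrix.unitaryGroup (Fin 2) ℂ) := hcb
  have hcomm : ∀ g : G, g * c = c * g := by
    intro g
    ext : 1
    push_cast
    exact Subgroup.mem_center_iff.mp hcc g
  have hcomm' : ∀ g : G, g * d = d * g := by
    intro g
    ext : 1
    push_cast
    exact Subgroup.mem_center_iff.mp hdc g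
  have ha' : a = X * c := by rw [hc]; group
  have hb' : b = Y * d := by rw [hd]; group
  have h := hab
  rw [ha', hb'] at h
  have e1 : X * c * (Y * d) = X * Y * (c * d) := by
    rw [mul_assoc X c (Y * d), ← mul_assoc c Y d, ← hcomm Y, mul_assoc Y c d, ← mul_assoc]
  have e2 : Y * d * (X * c) = Y * X * (c * d) := by
    rw [mul_assoc Y d (X * c), ← mul_assoc d X c, ← hcomm' X, mul_assoc X d c,
      ← hcomm' c, ← mul_assoc]
  rw [e1, e2] at h
  have hXY : X * Y = Y * X := mul_right_cancel h
  have hZ1 : Z = 1 := by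
    have := hkey.symm.trans hXY
    exact (left_eq_mul.mp this.symm)
  have : ((Z : Matrix.unitaryGroup (Fin 2) ℂ) : Matrix (Fin 2) (Fin 2) ℂ) 0 0 = 1 := by
    rw [hZ1]
    simp
  rw [show ((Z : Matrix.unitaryGroup (Fin 2) ℂ) : Matrix (Fin 2) (Fin 2) ℂ) = -1 from rfl] at this
  simp at this
  exact (by norm_num : (-1 : ℂ) ≠ 1) (by simpa using this)
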